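/- Let N ≥ 1, λ ∈ ℝ, β > 0, and for each j ∈ ℤ/N let L_j < R_j be reals with element length H_j := R_j − L_j, κ_j : ℝ → ℝ be continuously differentiable with κ_j(x) ≥ β·H_j²/(4π²) on [L_j, R_j], and v_j : ℝ → ℝ be twice continuously differentiable satisfying the eigenvalue equation (κ_j·v_j')'(x) = λ·v_j(x) on [L_j, R_j], the γ = 0 edge conditions v_j(R_j) = v_j(L_j) and κ_j(R_j)·v_j'(R_j) = κ_j(L_j)·v_j'(L_j), and the orthogonality to piecewise constants ∫_{L_j}^{R_j} v_j(x) dx = 0 for every j. If ∑_j ∫_{L_j}^{R_j} v_j(x)² dx > 0, then λ ≤ −β. -/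

import Mathlib

open MeasureTheory intervalIntegral Real

open Complex AddCircle in
/-- Parseval's identity on an interval, for continuous functions. -/
private lemma parseval_hasSum {a b : ℝ} (hab : a < b) {f : ℝ → ℂ} (hf : Continuous f) :
    HasSum (fun n : ℤ => ‖fourierCoeffOn hab f n‖ ^ 2)
      ((b - a)⁻¹ * ∫ x in a..b, ‖f x‖ ^ 2) := by
  haveI hT : Fact (0 < b - a) := ⟨by linarith⟩
  set T : ℝ := b - a with hTdef
  set g : AddCircle T → ℂ := AddCircle.liftIoc T a f with hgdef
  have hgm : AEStronglyMeasurable g (haarAddCircle) := by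
    have h1 : Measurable fun t : AddCircle T => ((measurableEquivIoc T a) t : ℝ) :=
      measurable_subtype_coe.comp (measurableEquivIoc T a).measurable
    exact (hf.measurable.comp h1).aestronglyMeasurable
  obtain ⟨C, hC⟩ : ∃ C, ∀ x ∈ Set.Icc a (a + T), ‖f x‖ ≤ C :=
    (isCompact_Icc).exists_bound_of_continuousOn hf.continuousOn
  have hmem : MemLp g 2 haarAddCircle := by
    refine MemLp.of_bound hgm C (Filter.Eventually.of_forall fun t => ?_)
    have h2 := (equivIoc T a t).2
    have : g t = f ((equivIoc T a t : ℝ)) := rfl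
    rw [this]
    exact hC _ (Set.Ioc_subset_Icc_self h2)
  have hcoeff : ∀ n : ℤ, fourierCoeff (⇑(hmem.toLp g)) n = fourierCoeffOn hab f n := by
    intro n
    have h1 : fourierCoeff (⇑(hmem.toLp g)) n = fourierCoeff g n := by
      unfold fourierCoeff
      refine integral_congr_ae ?_
      filter_upwards [hmem.coeFn_toLp] with t ht
      rw [ht]
    rw [h1]
    rfl
  have hsum : Summable fun n : ℤ => ‖fourierCoeffOn hab f n‖ ^ 2 := by
    have h := lp.memℓp (fourierBasis.repr (hmem.toLp g))
    rw [memℓp_gen_iff (by norm_num : 0 < (2 : ENNReal).toReal)] at h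
    have h2 : ∀ n : ℤ, ‖(fourierBasis.repr (hmem.toLp g)) n‖ ^ ((2 : ENNReal).toReal)
        = ‖fourierCoeffOn hab f n‖ ^ 2 := by
      intro n
      rw [fourierBasis_repr, hcoeff n]
      rw [show ((2 : ENNReal).toReal) = ((2 : ℕ) : ℝ) by norm_num, Real.rpow_natCast]
    exact (summable_congr h2).mp h
  have htsum := tsum_sq_fourierCoeff (hmem.toLp g)
  have h1 : (∫ t, ‖(hmem.toLp g : Lp ℂ 2 (haarAddCircle (T := T))) t‖ ^ 2 ∂haarAddCircle)
      = ∫ t, ‖g t‖ ^ 2 ∂(haarAddCircle) := by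
    refine integral_congr_ae ?_
    filter_upwards [hmem.coeFn_toLp] with t ht
    rw [ht]
  have h2 : (∫ t, ‖g t‖ ^ 2 ∂(haarAddCircle (T := T)))
      = T⁻¹ * ∫ t, ‖g t‖ ^ 2 ∂(volume : Measure (AddCircle T)) := by
    rw [AddCircle.volume_eq_smul_haarAddCircle, MeasureTheory.integral_smul_measure,
      ENNReal.toReal_ofReal hT.out.le, smul_eq_mul, ← mul_assoc,
      inv_mul_cancel₀ hT.out.ne', one_mul]
  have h3 : (∫ t, ‖g t‖ ^ 2 ∂(volume : Measure (AddCircle T)))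
      = ∫ x in a..b, ‖f x‖ ^ 2 := by
    rw [← AddCircle.intervalIntegral_preimage T a (fun t => ‖g t‖ ^ 2)]
    have hb : a + T = b := by rw [hTdef]; ring
    rw [hb, intervalIntegral.integral_of_le hab.le, intervalIntegral.integral_of_le hab.le]
    refine setIntegral_congr_fun measurableSet_Ioc fun x hx => ?_
    have hx' : x ∈ Set.Ioc a (a + T) := by rwa [hb]
    rw [hgdef]
    rw [AddCircle.liftIoc_coe_apply hx']
  have hval : (∑' n : ℤ, ‖fourierCoeffOn hab f n‖ ^ 2)
      = T⁻¹ * ∫ x in a..b, ‖f x‖ ^ 2 := by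
    rw [show (∑' n : ℤ, ‖fourierCoeffOn hab f n‖ ^ 2)
        = ∑' n : ℤ, ‖fourierCoeff (⇑(hmem.toLp g)) n‖ ^ 2 from
      tsum_congr fun n => by rw [hcoeff n], htsum, h1, h2, h3]
  exact hval ▸ hsum.hasSum

open Complex in
/-- Wirtinger's inequality on an interval, for `C¹` functions with equal endpoint
values and zero mean. -/
private lemma wirtinger {a b : ℝ} (hab : a < b) {f : ℝ → ℝ} (hf : ContDiff ℝ 1 f)
    (hper : f b = f a) (hmean : (∫ x in a..b, f x) = 0) :
    4 * π ^ 2 / (b - a) ^ 2 * ∫ x in a..b, f x ^ 2 ≤ ∫ x in a..b, deriv f x ^ 2 := by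
  have hT : (0 : ℝ) < b - a := by linarith
  have hdc : Continuous (deriv f) := hf.continuous_deriv le_rfl
  set F : ℝ → ℂ := fun x => ((f x : ℝ) : ℂ) with hFdef
  set F' : ℝ → ℂ := fun x => ((deriv f x : ℝ) : ℂ) with hF'def
  have hFc : Continuous F := Complex.continuous_ofReal.comp hf.continuous
  have hF'c : Continuous F' := Complex.continuous_ofReal.comp hdc
  have P1 := parseval_hasSum hab hFc
  have P2 := parseval_hasSum hab hF'c
  have key : ∀ n : ℤ, (2 * π / (b - a)) ^ 2 * ‖fourierCoeffOn hab F n‖ ^ 2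
      ≤ ‖fourierCoeffOn hab F' n‖ ^ 2 := by
    intro n
    rcases eq_or_ne n 0 with rfl | hn
    · have h0 : fourierCoeffOn hab F 0 = 0 := by
        rw [fourierCoeffOn_eq_integral]
        simp only [neg_zero, fourier_zero, one_smul, hFdef]
        rw [intervalIntegral.integral_ofReal, hmean]
        simp
      rw [h0]
      have hnn : (0:ℝ) ≤ ‖fourierCoeffOn hab F' 0‖ ^ 2 := by positivity
      simp only [norm_zero, ne_eq, OfNat.ofNat_ne_zero, not_false_eq_true, zero_pow, mul_zero]
      exact hnn
    · have hd : ∀ x ∈ Set.uIcc a b, HasDerivAt F (F' x) x := fun x _ =>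
        ((hf.differentiable one_ne_zero x).hasDerivAt).ofReal_comp
      have hint : IntervalIntegrable F' volume a b := hF'c.intervalIntegrable _ _
      have heq := fourierCoeffOn_of_hasDerivAt hab hn hd hint
      have hFb : F b - F a = 0 := by simp [hFdef, hper]
      rw [hFb, mul_zero, zero_sub] at heq
      have hnormw : ‖(1 : ℂ) / (-2 * ↑π * Complex.I * ↑n)‖ = 1 / (2 * π * |(n : ℝ)|) := by
        rw [norm_div, norm_one]
        congr 1
        simp only [norm_mul, Complex.norm_I, Complex.norm_intCast]
        rw [norm_neg]
        simp [abs_of_pos Real.pi_pos]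
      have h1 : ‖fourierCoeffOn hab F n‖
          = 1 / (2 * π * |(n : ℝ)|) * ((b - a) * ‖fourierCoeffOn hab F' n‖) := by
        rw [heq, norm_mul, hnormw, norm_neg, norm_mul, ← Complex.ofReal_sub,
          Complex.norm_real, Real.norm_eq_abs, abs_of_pos hT]
      have hn1 : (1 : ℝ) ≤ |(n : ℝ)| := by
        rw [← Int.cast_abs]
        exact_mod_cast Int.one_le_abs (by omega)
      have hπ := Real.pi_pos
      have hcle : ‖fourierCoeffOn hab F n‖ ≤ (b - a) / (2 * π) * ‖fourierCoeffOn hab F' n‖ := by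
        rw [h1]
        have hd0 : 0 < 2 * π * |(n : ℝ)| := by positivity
        have : 1 / (2 * π * |(n : ℝ)|) ≤ 1 / (2 * π) := by
          apply one_div_le_one_div_of_le (by positivity)
          nlinarith
        calc 1 / (2 * π * |(n : ℝ)|) * ((b - a) * ‖fourierCoeffOn hab F' n‖)
            ≤ 1 / (2 * π) * ((b - a) * ‖fourierCoeffOn hab F' n‖) := by
              apply mul_le_mul_of_nonneg_right this (by positivity)
          _ = (b - a) / (2 * π) * ‖fourierCoeffOn hab F' n‖ := by ring
      have hnn : (0 : ℝ) ≤ ‖fourierCoeffOn hab F n‖ := norm_nonneg _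
      have hnn' : (0 : ℝ) ≤ ‖fourierCoeffOn hab F' n‖ := norm_nonneg _
      have hsq := mul_le_mul hcle hcle hnn (by positivity)
      have h2π : (0 : ℝ) < 2 * π := by positivity
      rw [div_pow, div_mul_eq_mul_div, div_le_iff₀ (by positivity)]
      calc (2 * π) ^ 2 * ‖fourierCoeffOn hab F n‖ ^ 2
          = (2 * π) ^ 2 * (‖fourierCoeffOn hab F n‖ * ‖fourierCoeffOn hab F n‖) := by ring
        _ ≤ (2 * π) ^ 2 * ((b - a) / (2 * π) * ‖fourierCoeffOn hab F' n‖ *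
              ((b - a) / (2 * π) * ‖fourierCoeffOn hab F' n‖)) := by
              exact mul_le_mul_of_nonneg_left hsq (by positivity)
        _ = ‖fourierCoeffOn hab F' n‖ ^ 2 * (b - a) ^ 2 := by
              field_simp
  have hle := Summable.tsum_le_tsum key (P1.summable.mul_left _) P2.summable
  rw [tsum_mul_left, P1.tsum_eq, P2.tsum_eq] at hle
  have e1 : (∫ x in a..b, ‖F x‖ ^ 2) = ∫ x in a..b, f x ^ 2 := by
    refine intervalIntegral.integral_congr fun x _ => ?_
    simp [hFdef, Complex.norm_real, _root_.sq_abs]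
  have e2 : (∫ x in a..b, ‖F' x‖ ^ 2) = ∫ x in a..b, deriv f x ^ 2 := by
    refine intervalIntegral.integral_congr fun x _ => ?_
    simp [hF'def, Complex.norm_real, _root_.sq_abs]
  rw [e1, e2] at hle
  have hmul : (4 * π ^ 2 / (b - a) ^ 2 * ∫ x in a..b, f x ^ 2) * (b - a)⁻¹
      ≤ (∫ x in a..b, deriv f x ^ 2) * (b - a)⁻¹ := by
    calc (4 * π ^ 2 / (b - a) ^ 2 * ∫ x in a..b, f x ^ 2) * (b - a)⁻¹
        = (2 * π / (b - a)) ^ 2 * ((b - a)⁻¹ * ∫ x in a..b, f x ^ 2) := by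
          field_simp
          ring
      _ ≤ (b - a)⁻¹ * ∫ x in a..b, deriv f x ^ 2 := hle
      _ = (∫ x in a..b, deriv f x ^ 2) * (b - a)⁻¹ := by ring
  exact le_of_mul_le_mul_right hmul (inv_pos.mpr hT)

/-- Per-element bound: integration by parts plus Wirtinger. -/
private lemma element_bound {a b lam β : ℝ} (hab : a < b) (hβ : 0 < β)
    {K w : ℝ → ℝ} (hK : ContDiff ℝ 1 K)
    (hKβ : ∀ x ∈ Set.Icc a b, β * (b - a) ^ 2 / (4 * π ^ 2) ≤ K x)
    (hw : ContDiff ℝ 2 w)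
    (heig : ∀ x ∈ Set.Icc a b, deriv (fun y => K y * deriv w y) x = lam * w x)
    (hE : w b = w a) (hF : K b * deriv w b = K a * deriv w a)
    (hmean : (∫ x in a..b, w x) = 0) :
    lam * (∫ x in a..b, w x ^ 2) ≤ -β * ∫ x in a..b, w x ^ 2 := by
  have hT : (0 : ℝ) < b - a := by linarith
  have hw1 : ContDiff ℝ 1 w := hw.of_le (by norm_num)
  have hdw : ContDiff ℝ 1 (deriv w) := by
    have h2 : ContDiff ℝ ((1 : WithTop ℕ∞) + 1) w := by
      have e : ((1 : WithTop ℕ∞) + 1) = 2 := by norm_num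
      rw [e]; exact hw
    exact (contDiff_succ_iff_deriv.mp h2).2.2
  set u : ℝ → ℝ := fun y => K y * deriv w y with hu_def
  have hu : ContDiff ℝ 1 u := hK.mul hdw
  have hud : ∀ x ∈ Set.uIcc a b, HasDerivAt u (deriv u x) x :=
    fun x _ => (hu.differentiable one_ne_zero x).hasDerivAt
  have hwd : ∀ x ∈ Set.uIcc a b, HasDerivAt w (deriv w x) x :=
    fun x _ => (hw1.differentiable one_ne_zero x).hasDerivAt
  have hu'int : IntervalIntegrable (deriv u) volume a b :=
    (hu.continuous_deriv le_rfl).intervalIntegrable _ _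
  have hw'int : IntervalIntegrable (deriv w) volume a b :=
    hdw.continuous.intervalIntegrable _ _
  have ibp := intervalIntegral.integral_deriv_mul_eq_sub hud hwd hu'int hw'int
  have hbd : u b * w b - u a * w a = 0 := by
    simp only [hu_def]
    rw [hF, hE]
    ring
  rw [hbd] at ibp
  have hi1 : IntervalIntegrable (fun x => deriv u x * w x) volume a b :=
    ((hu.continuous_deriv le_rfl).mul hw1.continuous).intervalIntegrable _ _
  have hi2 : IntervalIntegrable (fun x => u x * deriv w x) volume a b :=
    (hu.continuous.mul hdw.continuous).intervalIntegrable _ _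
  rw [intervalIntegral.integral_add hi1 hi2] at ibp
  have e1 : (∫ x in a..b, deriv u x * w x) = lam * ∫ x in a..b, w x ^ 2 := by
    rw [← intervalIntegral.integral_const_mul]
    refine intervalIntegral.integral_congr fun x hx => ?_
    rw [Set.uIcc_of_le hab.le] at hx
    rw [heig x hx]
    ring
  have e2 : (∫ x in a..b, u x * deriv w x) = ∫ x in a..b, K x * deriv w x ^ 2 := by
    refine intervalIntegral.integral_congr fun x _ => ?_
    simp only [hu_def]
    ring
  rw [e1, e2] at ibp
  have hmain : lam * (∫ x in a..b, w x ^ 2) = - ∫ x in a..b, K x * deriv w x ^ 2 := by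
    linarith
  have W := wirtinger hab hw1 hE hmean
  set c : ℝ := β * (b - a) ^ 2 / (4 * π ^ 2) with hc_def
  have hπ := Real.pi_pos
  have hc : 0 < c := by positivity
  have hmono : c * (∫ x in a..b, deriv w x ^ 2) ≤ ∫ x in a..b, K x * deriv w x ^ 2 := by
    rw [← intervalIntegral.integral_const_mul]
    refine intervalIntegral.integral_mono_on hab.le
      ((continuous_const.mul (hdw.continuous.pow 2)).intervalIntegrable _ _)
      ((hK.continuous.mul (hdw.continuous.pow 2)).intervalIntegrable _ _)
      fun x hx => mul_le_mul_of_nonneg_right (hKβ x hx) (sq_nonneg _)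
  have hcβ : c * (4 * π ^ 2 / (b - a) ^ 2) = β := by
    rw [hc_def]
    field_simp
  calc lam * (∫ x in a..b, w x ^ 2)
      = - ∫ x in a..b, K x * deriv w x ^ 2 := hmain
    _ ≤ -(c * ∫ x in a..b, deriv w x ^ 2) := neg_le_neg hmono
    _ ≤ -(c * (4 * π ^ 2 / (b - a) ^ 2 * ∫ x in a..b, w x ^ 2)) :=
        neg_le_neg (mul_le_mul_of_nonneg_left W hc.le)
    _ = -β * ∫ x in a..b, w x ^ 2 := by rw [← mul_assoc, hcβ]; ring

/-- Lemma 2.3 (spectral gap): for the operator `ℒ := (κ_j v')'` on elements with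
γ = 0 edge conditions and `κ_j ≥ β H_j²/(4π²)`, every eigenvalue whose
eigenfunction has zero mean on each element (and is not identically zero)
satisfies `λ ≤ −β`. -/
theorem eigenvalues_spectral_gap
    (N : ℕ) [NeZero N] (lam β : ℝ) (hβ : 0 < β)
    (L R : ZMod N → ℝ) (hLR : ∀ j, L j < R j)
    (κ v : ZMod N → ℝ → ℝ)
    (hκ : ∀ j, ContDiff ℝ 1 (κ j))
    (hκβ : ∀ j, ∀ x ∈ Set.Icc (L j) (R j),
      β * (R j - L j) ^ 2 / (4 * Real.pi ^ 2) ≤ κ j x)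
    (hv : ∀ j, ContDiff ℝ 2 (v j))
    (heig : ∀ j, ∀ x ∈ Set.Icc (L j) (R j),
      deriv (fun y => κ j y * deriv (v j) y) x = lam * v j x)
    (hE : ∀ j, v j (R j) = v j (L j))
    (hF : ∀ j, κ j (R j) * deriv (v j) (R j) = κ j (L j) * deriv (v j) (L j))
    (hmean : ∀ j, (∫ x in (L j)..(R j), v j x) = 0)
    (hpos : 0 < ∑ j : ZMod N, ∫ x in (L j)..(R j), (v j x) ^ 2) :
    lam ≤ -β := by
  have key : ∀ j : ZMod N, lam * (∫ x in (L j)..(R j), v j x ^ 2)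
      ≤ -β * ∫ x in (L j)..(R j), v j x ^ 2 :=
    fun j => element_bound (hLR j) hβ (hκ j) (hκβ j) (hv j) (heig j) (hE j) (hF j) (hmean j)
  have hsum := Finset.sum_le_sum (fun j (_ : j ∈ Finset.univ) => key j)
  rw [← Finset.mul_sum, ← Finset.mul_sum] at hsum
  nlinarith [hpos, hsum]
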